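/- Let S be a semidomain. If the Laurent polynomial semidomain S[x^{±1}] is atomic, then S is atomic and every indecomposable polynomial in S[x] has a maximal common divisor of its set of nonzero coefficients. -/

import Mathlib

open Polynomial

/-- A witness that the commutative semiring `S` embeds into an integral domain. -/
structure SemidomainWitness (S : Type) [CommSemiring S] : Type 1 where
  R : Type
  [commRing : CommRing R]
  [isDomain : IsDomain R]
  f : S →+* R
  inj : Function.Injective f

/-- A semidomain is a commutative semiring that embeds into an integral domain. -/
def IsSemidomain (S : Type) [CommSemiring S] : Prop :=
  Nonempty (SemidomainWitness S)


/-- A commutative monoid with zero is atomic if every nonzero nonunit is a finite product of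
irreducible elements. -/
def Atomic (M : Type) [CommMonoidWithZero M] : Prop :=
  ∀ a : M, a ≠ 0 → ¬ IsUnit a → ∃ l : Multiset M, (∀ b ∈ l, Irreducible b) ∧ l.prod = a

/-- A nonzero polynomial is indecomposable if it is not a product of two non-constant
polynomials. -/
def Indecomposable {S : Type} [CommSemiring S] (f : Polynomial S) : Prop :=
  f ≠ 0 ∧ ¬ ∃ g h : Polynomial S, 0 < g.natDegree ∧ 0 < h.natDegree ∧ f = g * h

/-- `d` is a maximal common divisor of the set `T`: `d` is a common divisor of `T` and every
greatest common divisor of the set of quotients `T/d` is a unit.  (Here `g` is a gcd of `T/d`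
iff `d*g` divides every element of `T` and every `e` with `d*e` dividing every element of `T`
divides `g`.) -/
def IsMCD {S : Type} [CommSemiring S] (d : S) (T : Set S) : Prop :=
  (∀ t ∈ T, d ∣ t) ∧
    ∀ g : S, ((∀ t ∈ T, d * g ∣ t) ∧ ∀ e : S, (∀ t ∈ T, d * e ∣ t) → e ∣ g) → IsUnit g

namespace Stmt7Aux

open LaurentPolynomial

variable {S : Type} [CommSemiring S]

/-- Multiplying by `T z` preserves nonzeroness. -/
lemma T_mul_ne_zero (z : ℤ) {x : LaurentPolynomial S} (hx : x ≠ 0) : T z * x ≠ 0 := by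
  intro h
  apply hx
  calc x = (T (-z) * T z) * x := by rw [← T_add, neg_add_cancel, T_zero, one_mul]
    _ = T (-z) * (T z * x) := by rw [mul_assoc]
    _ = 0 := by rw [h, mul_zero]

/-- Cancel `T z` from an equation. -/
lemma T_cancel {z : ℤ} {x y : LaurentPolynomial S} (h : T z * x = T z * y) : x = y := by
  calc x = (T (-z) * T z) * x := by rw [← T_add, neg_add_cancel, T_zero, one_mul]
    _ = T (-z) * (T z * x) := by rw [mul_assoc]
    _ = T (-z) * (T z * y) := by rw [h]
    _ = (T (-z) * T z) * y := by rw [mul_assoc]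
    _ = y := by rw [← T_add, neg_add_cancel, T_zero, one_mul]

lemma irr_of_T_mul_irr {u : ℤ} {x : LaurentPolynomial S}
    (h : Irreducible (T u * x)) : Irreducible x := by
  refine Associated.irreducible ?_ h
  exact ⟨(isUnit_T (-u)).unit, by
    simp only [IsUnit.unit_spec]
    rw [mul_comm (T u) x, mul_assoc, ← T_add, add_neg_cancel, T_zero, mul_one]⟩

lemma rigid_nat (k : ℕ) {p₁ p₂ : S[X]} (h₂ : p₂.coeff 0 ≠ 0)
    (h : T (k : ℤ) * Polynomial.toLaurent p₁ = Polynomial.toLaurent p₂) :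
    k = 0 ∧ p₁ = p₂ := by
  have hX : Polynomial.toLaurent (X ^ k * p₁) = Polynomial.toLaurent p₂ := by
    rw [map_mul, Polynomial.toLaurent_X_pow]; exact h
  have he : X ^ k * p₁ = p₂ := Polynomial.toLaurent_injective hX
  cases k with
  | zero => constructor; · rfl
            · rw [← he, pow_zero, one_mul]
  | succ k =>
    exfalso
    apply h₂
    rw [← he, Polynomial.mul_coeff_zero, Polynomial.coeff_X_pow]
    simp

lemma rigid {z₁ z₂ : ℤ} {p₁ p₂ : S[X]} (h₁ : p₁.coeff 0 ≠ 0) (h₂ : p₂.coeff 0 ≠ 0)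
    (h : T z₁ * Polynomial.toLaurent p₁ = T z₂ * Polynomial.toLaurent p₂) :
    z₁ = z₂ ∧ p₁ = p₂ := by
  rcases le_total z₂ z₁ with hle | hle
  · obtain ⟨k, hk⟩ : ∃ k : ℕ, z₁ = z₂ + (k : ℤ) := ⟨(z₁ - z₂).toNat, by omega⟩
    have h' : T z₂ * (T (k : ℤ) * Polynomial.toLaurent p₁)
        = T z₂ * Polynomial.toLaurent p₂ := by
      rw [← mul_assoc, ← T_add, ← hk]; exact h
    obtain ⟨hk0, hp⟩ := rigid_nat k h₂ (T_cancel h')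
    exact ⟨by omega, hp⟩
  · obtain ⟨k, hk⟩ : ∃ k : ℕ, z₂ = z₁ + (k : ℤ) := ⟨(z₂ - z₁).toNat, by omega⟩
    have h' : T z₁ * (T (k : ℤ) * Polynomial.toLaurent p₂)
        = T z₁ * Polynomial.toLaurent p₁ := by
      rw [← mul_assoc, ← T_add, ← hk]; exact h.symm
    obtain ⟨hk0, hp⟩ := rigid_nat k h₁ (T_cancel h')
    exact ⟨by omega, hp.symm⟩

section nzd

variable (hnzd : ∀ a b : S, a * b = 0 → a = 0 ∨ b = 0)

include hnzd

lemma poly_mul_ne_zero {p q : S[X]} (hp : p ≠ 0) (hq : q ≠ 0) : p * q ≠ 0 := by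
  intro h
  have hl : p.leadingCoeff * q.leadingCoeff ≠ 0 := by
    intro h0
    rcases hnzd _ _ h0 with h' | h'
    · exact hp (Polynomial.leadingCoeff_eq_zero.mp h')
    · exact hq (Polynomial.leadingCoeff_eq_zero.mp h')
  apply hl
  rw [← Polynomial.coeff_mul_degree_add_degree, h, Polynomial.coeff_zero]

lemma poly_natDegree_mul {p q : S[X]} (hp : p ≠ 0) (hq : q ≠ 0) :
    (p * q).natDegree = p.natDegree + q.natDegree := by
  apply Polynomial.natDegree_mul'
  intro h0
  rcases hnzd _ _ h0 with h' | h'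
  · exact hp (Polynomial.leadingCoeff_eq_zero.mp h')
  · exact hq (Polynomial.leadingCoeff_eq_zero.mp h')

omit hnzd in
/-- Strip off the largest power of `X` dividing a nonzero polynomial. -/
lemma exists_shift {p : S[X]} (hp : p ≠ 0) :
    ∃ (k : ℕ) (q : S[X]), p = X ^ k * q ∧ q.coeff 0 ≠ 0 := by
  obtain ⟨n, hn⟩ : ∃ n, p.natDegree = n := ⟨_, rfl⟩
  induction n using Nat.strong_induction_on generalizing p with
  | _ n ih =>
    by_cases h0 : p.coeff 0 ≠ 0
    · exact ⟨0, p, by rw [pow_zero, one_mul], h0⟩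
    · push_neg at h0
      have hpd : p = X * p.divX := by
        conv_lhs => rw [← Polynomial.X_mul_divX_add p]
        rw [h0, map_zero, add_zero]
      have hdx : p.divX ≠ 0 := by
        intro hd; apply hp; rw [hpd, hd, mul_zero]
      have hX : (X : S[X]) ≠ 0 := by
        intro hX0
        apply hp; rw [hpd, hX0, zero_mul]
      have hnt : Nontrivial S :=
        ⟨p.divX.leadingCoeff, 0, Polynomial.leadingCoeff_ne_zero.mpr hdx⟩
      have hdeg : p.divX.natDegree < n := by
        have h1 : p.natDegree = 1 + p.divX.natDegree := by
          conv_lhs => rw [hpd]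
          rw [Polynomial.natDegree_mul' ?_, Polynomial.natDegree_X]
          rw [Polynomial.leadingCoeff_X, one_mul]
          exact Polynomial.leadingCoeff_ne_zero.mpr hdx
        omega
      obtain ⟨k, q, hq, hq0⟩ := ih _ hdeg hdx rfl
      exact ⟨k + 1, q, by rw [hpd, hq, pow_succ, mul_comm (X ^ k) X, mul_assoc], hq0⟩

omit hnzd in
lemma laurent_decomp {f : LaurentPolynomial S} (hf : f ≠ 0) :
    ∃ (z : ℤ) (p : S[X]), f = T z * Polynomial.toLaurent p ∧ p.coeff 0 ≠ 0 := by
  obtain ⟨n, p₀, hp₀⟩ := exists_T_pow f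
  have hfeq : f = T (-(n : ℤ)) * Polynomial.toLaurent p₀ := by
    rw [hp₀, mul_comm f (T (n : ℤ)), ← mul_assoc, ← T_add, neg_add_cancel, T_zero, one_mul]
  have hp0 : p₀ ≠ 0 := by
    intro h0; apply hf; rw [hfeq, h0, map_zero, mul_zero]
  obtain ⟨k, q, hq, hq0⟩ := exists_shift hp0
  refine ⟨-(n : ℤ) + k, q, ?_, hq0⟩
  rw [hfeq, hq, map_mul, Polynomial.toLaurent_X_pow, ← mul_assoc, ← T_add]

omit hnzd in
lemma one_ne_zero_of_ne {a : S} (ha : a ≠ 0) : (1 : S) ≠ 0 := by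
  intro h1
  exact ha (Subsingleton.elim (α := S)
    (h := subsingleton_of_zero_eq_one h1.symm) _ _)

lemma const_unit {c : S} (h : IsUnit (LaurentPolynomial.C c)) : IsUnit c := by
  by_cases h1 : (1 : S) = 0
  · haveI := subsingleton_of_zero_eq_one h1.symm
    exact IsUnit.of_mul_eq_one (a := c) 1 (Subsingleton.elim _ _)
  by_cases hc : c = 0
  · exfalso
    obtain ⟨v, hv⟩ := h.exists_right_inv
    rw [hc, map_zero, zero_mul] at hv
    have : (Polynomial.toLaurent (1 : S[X])) = 0 := by rw [map_one, ← hv]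
    rw [Polynomial.toLaurent_eq_zero] at this
    exact h1 (by simpa using congrArg (fun p => Polynomial.coeff p 0) this)
  obtain ⟨v, hv⟩ := h.exists_right_inv
  have hvne : v ≠ 0 := by
    intro h0; rw [h0, mul_zero] at hv
    have : (Polynomial.toLaurent (1 : S[X])) = 0 := by rw [map_one, ← hv]
    rw [Polynomial.toLaurent_eq_zero] at this
    exact h1 (by simpa using congrArg (fun p => Polynomial.coeff p 0) this)
  obtain ⟨z, q, hq, hq0⟩ := laurent_decomp hvne
  have key : T (0 : ℤ) * Polynomial.toLaurent (1 : S[X])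
      = T z * Polynomial.toLaurent (Polynomial.C c * q) := by
    rw [T_zero, one_mul, map_one, map_mul, Polynomial.toLaurent_C, ← hv, hq]
    ring
  have hcq : (Polynomial.C c * q).coeff 0 ≠ 0 := by
    rw [Polynomial.mul_coeff_zero, Polynomial.coeff_C_zero]
    intro h0
    rcases hnzd _ _ h0 with h' | h'
    · exact hc h'
    · exact hq0 h'
  obtain ⟨-, hpe⟩ := rigid (by simpa using h1) hcq key
  have : c * q.coeff 0 = 1 := by
    have := congrArg (fun p => Polynomial.coeff p 0) hpe
    simpa [Polynomial.mul_coeff_zero] using this.symm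
  exact IsUnit.of_mul_eq_one _ this

lemma nonunit_of_pos_degree {p : S[X]} (h0 : p.coeff 0 ≠ 0) (hd : 0 < p.natDegree) :
    ¬ IsUnit (Polynomial.toLaurent p) := by
  intro h
  have h1 : (1 : S) ≠ 0 := one_ne_zero_of_ne h0
  obtain ⟨v, hv⟩ := h.exists_right_inv
  have hvne : v ≠ 0 := by
    intro hz; rw [hz, mul_zero] at hv
    have : (Polynomial.toLaurent (1 : S[X])) = 0 := by rw [map_one, ← hv]
    rw [Polynomial.toLaurent_eq_zero] at this
    exact h1 (by simpa using congrArg (fun r => Polynomial.coeff r 0) this)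
  obtain ⟨z, q, hq, hq0⟩ := laurent_decomp hvne
  have key : T (0 : ℤ) * Polynomial.toLaurent (1 : S[X])
      = T z * Polynomial.toLaurent (p * q) := by
    rw [T_zero, one_mul, map_one, map_mul, ← hv, hq]
    ring
  have hpq : (p * q).coeff 0 ≠ 0 := by
    rw [Polynomial.mul_coeff_zero]
    intro hz
    rcases hnzd _ _ hz with h' | h'
    · exact h0 h'
    · exact hq0 h'
  obtain ⟨-, hpe⟩ := rigid (by simpa using h1) hpq key
  have hp : p ≠ 0 := fun hz => h0 (by rw [hz, Polynomial.coeff_zero])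
  have hqz : q ≠ 0 := fun hz => hq0 (by rw [hz, Polynomial.coeff_zero])
  have := poly_natDegree_mul hnzd hp hqz
  rw [← hpe, Polynomial.natDegree_one] at this
  omega

lemma irr_const {c : S} (h : Irreducible (LaurentPolynomial.C c)) : Irreducible c := by
  constructor
  · intro hc
    exact h.not_isUnit (hc.map (LaurentPolynomial.C (R := S)))
  · intro a b hab
    have : LaurentPolynomial.C c = LaurentPolynomial.C a * LaurentPolynomial.C b := by
      rw [← map_mul, hab]
    rcases h.isUnit_or_isUnit this with h' | h'
    · exact Or.inl (const_unit hnzd h')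
    · exact Or.inr (const_unit hnzd h')

omit hnzd in
lemma dvd_factor {g : S} {q : S[X]} (h : ∀ i, g ∣ q.coeff i) :
    ∃ q' : S[X], q = Polynomial.C g * q' := by
  classical
  refine ⟨∑ i ∈ q.support, Polynomial.C (Classical.choose (h i)) * X ^ i, ?_⟩
  rw [Finset.mul_sum]
  conv_lhs => rw [Polynomial.as_sum_support q]
  refine Finset.sum_congr rfl fun i _ => ?_
  rw [← mul_assoc, ← map_mul, ← Classical.choose_spec (h i),
    Polynomial.C_mul_X_pow_eq_monomial]

/-- Key induction: a Laurent factorization of a polynomial into irreducibles yields a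
polynomial factorization into a constant and positive-degree Laurent-irreducible factors. -/
lemma factor_poly (l : Multiset (LaurentPolynomial S)) :
    ∀ (z : ℤ) (f : S[X]), (∀ b ∈ l, Irreducible b) →
      l.prod = T z * Polynomial.toLaurent f → f.coeff 0 ≠ 0 →
      ∃ (d : S) (m : Multiset S[X]), f = Polynomial.C d * m.prod ∧ d ≠ 0 ∧
        ∀ q ∈ m, q.coeff 0 ≠ 0 ∧ 0 < q.natDegree ∧ Irreducible (Polynomial.toLaurent q) := by
  induction l using Multiset.induction_on with
  | empty =>
    intro z f _ hprod hf0
    rw [Multiset.prod_zero] at hprod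
    have key : T (0 : ℤ) * Polynomial.toLaurent (1 : S[X]) = T z * Polynomial.toLaurent f := by
      rw [T_zero, one_mul, map_one]; exact hprod
    obtain ⟨-, hpe⟩ := rigid (by simpa using one_ne_zero_of_ne hf0) hf0 key
    exact ⟨1, 0, by rw [← hpe, Multiset.prod_zero, map_one, mul_one],
      one_ne_zero_of_ne hf0, by simp⟩
  | cons b l' ih =>
    intro z f hirr hprod hf0
    rw [Multiset.prod_cons] at hprod
    have hfne : f ≠ 0 := fun hz => hf0 (by rw [hz, Polynomial.coeff_zero])
    have hrhs : T z * Polynomial.toLaurent f ≠ 0 :=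
      T_mul_ne_zero z (Polynomial.toLaurent_ne_zero.mpr hfne)
    have hbne : b ≠ 0 := by
      intro hz; rw [hz, zero_mul] at hprod; exact hrhs hprod.symm
    have hlne : l'.prod ≠ 0 := by
      intro hz; rw [hz, mul_zero] at hprod; exact hrhs hprod.symm
    obtain ⟨u, q, hq, hq0⟩ := laurent_decomp hbne
    obtain ⟨w, F, hF, hF0⟩ := laurent_decomp hlne
    have key : T (u + w) * Polynomial.toLaurent (q * F) = T z * Polynomial.toLaurent f := by
      rw [map_mul, T_add, ← hprod, hq, hF]; ring
    have hqF : (q * F).coeff 0 ≠ 0 := by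
      rw [Polynomial.mul_coeff_zero]
      intro hz
      rcases hnzd _ _ hz with h' | h'
      · exact hq0 h'
      · exact hF0 h'
    obtain ⟨-, hpe⟩ := rigid hqF hf0 key
    obtain ⟨d', m', hm'eq, hd'ne, hm'⟩ := ih w F (fun b hb => hirr b (Multiset.mem_cons_of_mem hb))
      hF (by intro hz; exact hqF (by rw [Polynomial.mul_coeff_zero, hz, mul_zero]))
    have hirrq : Irreducible (Polynomial.toLaurent q) := by
      have hb : Irreducible b := hirr b (Multiset.mem_cons_self b l')
      rw [hq] at hb
      exact irr_of_T_mul_irr hb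
    by_cases hdq : q.natDegree = 0
    · have hqc : q = Polynomial.C (q.coeff 0) := Polynomial.eq_C_of_natDegree_eq_zero hdq
      refine ⟨q.coeff 0 * d', m', ?_, ?_, hm'⟩
      · rw [← hpe, hm'eq, map_mul, ← hqc, mul_assoc]
      · intro hz
        rcases hnzd _ _ hz with h' | h'
        · exact hq0 h'
        · exact hd'ne h'
    · refine ⟨d', q ::ₘ m', ?_, hd'ne, ?_⟩
      · rw [← hpe, hm'eq, Multiset.prod_cons]; ring
      · intro r hr
        rcases Multiset.mem_cons.mp hr with rfl | hr'
        · exact ⟨hq0, Nat.pos_of_ne_zero hdq, hirrq⟩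
        · exact hm' r hr'

/-- Induction for atomicity of `S`. -/
lemma atoms_const (l : Multiset (LaurentPolynomial S)) :
    ∀ (z : ℤ) (a : S), (∀ b ∈ l, Irreducible b) →
      l.prod = T z * LaurentPolynomial.C a → a ≠ 0 →
      ∃ m : Multiset S, (∀ c ∈ m, Irreducible c) ∧ m.prod = a := by
  induction l using Multiset.induction_on with
  | empty =>
    intro z a _ hprod ha
    rw [Multiset.prod_zero] at hprod
    have key : T (0 : ℤ) * Polynomial.toLaurent (1 : S[X])
        = T z * Polynomial.toLaurent (Polynomial.C a) := by
      rw [T_zero, one_mul, map_one, Polynomial.toLaurent_C]; exact hprod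
    obtain ⟨-, hpe⟩ := rigid (by simpa using one_ne_zero_of_ne ha) (by simpa using ha) key
    have : a = 1 := by
      have := congrArg (fun p => Polynomial.coeff p 0) hpe
      simpa using this.symm
    exact ⟨0, by simp, by rw [Multiset.prod_zero, this]⟩
  | cons b l' ih =>
    intro z a hirr hprod ha
    rw [Multiset.prod_cons] at hprod
    have hCa : (LaurentPolynomial.C a) ≠ 0 := by
      rw [← Polynomial.toLaurent_C]
      exact Polynomial.toLaurent_ne_zero.mpr (Polynomial.C_ne_zero.mpr ha)
    have hrhs : T z * LaurentPolynomial.C a ≠ 0 := T_mul_ne_zero z hCa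
    have hbne : b ≠ 0 := by
      intro hz; rw [hz, zero_mul] at hprod; exact hrhs hprod.symm
    have hlne : l'.prod ≠ 0 := by
      intro hz; rw [hz, mul_zero] at hprod; exact hrhs hprod.symm
    obtain ⟨u, q, hq, hq0⟩ := laurent_decomp hbne
    obtain ⟨w, F, hF, hF0⟩ := laurent_decomp hlne
    have key : T (u + w) * Polynomial.toLaurent (q * F)
        = T z * Polynomial.toLaurent (Polynomial.C a) := by
      rw [map_mul, T_add, Polynomial.toLaurent_C, ← hprod, hq, hF]; ring
    have hqF : (q * F).coeff 0 ≠ 0 := by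
      rw [Polynomial.mul_coeff_zero]
      intro hz
      rcases hnzd _ _ hz with h' | h'
      · exact hq0 h'
      · exact hF0 h'
    obtain ⟨-, hpe⟩ := rigid hqF (by simpa using ha) key
    -- natDegree q = natDegree F = 0
    have hqne : q ≠ 0 := fun hz => hq0 (by rw [hz, Polynomial.coeff_zero])
    have hFne : F ≠ 0 := fun hz => hF0 (by rw [hz, Polynomial.coeff_zero])
    have hdeg : q.natDegree + F.natDegree = 0 := by
      have := poly_natDegree_mul hnzd hqne hFne
      rw [hpe, Polynomial.natDegree_C] at this
      omega
    have hqc : q = Polynomial.C (q.coeff 0) :=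
      Polynomial.eq_C_of_natDegree_eq_zero (by omega)
    have hFc : F = Polynomial.C (F.coeff 0) :=
      Polynomial.eq_C_of_natDegree_eq_zero (by omega)
    have hce : q.coeff 0 * F.coeff 0 = a := by
      have := congrArg (fun p => Polynomial.coeff p 0) hpe
      simpa [Polynomial.mul_coeff_zero] using this
    obtain ⟨m', hm'irr, hm'prod⟩ := ih w (F.coeff 0)
      (fun b hb => hirr b (Multiset.mem_cons_of_mem hb))
      (by rw [hF, hFc, Polynomial.toLaurent_C, Polynomial.coeff_C_zero]) hF0
    have hirrc : Irreducible (q.coeff 0) := by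
      apply irr_const hnzd
      have hb : Irreducible b := hirr b (Multiset.mem_cons_self b l')
      rw [hq, hqc, Polynomial.toLaurent_C] at hb
      exact irr_of_T_mul_irr hb
    refine ⟨q.coeff 0 ::ₘ m', ?_, ?_⟩
    · intro c hc
      rcases Multiset.mem_cons.mp hc with rfl | hc'
      · exact hirrc
      · exact hm'irr c hc'
    · rw [Multiset.prod_cons, hm'prod, hce]

end nzd

end Stmt7Aux

open Stmt7Aux LaurentPolynomial in
/-- For a semidomain `S`: if the Laurent polynomial semidomain `S[x^{±1}]` is atomic, then `S`
is atomic and the set of nonzero coefficients of every indecomposable polynomial in `S[x]` has a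
maximal common divisor. -/
theorem stmt7 (S : Type) [CommSemiring S] (hS : IsSemidomain S)
    (h : Atomic (LaurentPolynomial S)) :
    Atomic S ∧ ∀ f : Polynomial S, Indecomposable f →
      ∃ d : S, IsMCD d {a : S | a ≠ 0 ∧ ∃ i : ℕ, f.coeff i = a} := by
  obtain ⟨w⟩ := hS
  letI := w.commRing
  letI := w.isDomain
  have hinj0 : ∀ a : S, w.f a = 0 → a = 0 := by
    intro a ha
    apply w.inj
    rw [ha, map_zero]
  have hnzd : ∀ a b : S, a * b = 0 → a = 0 ∨ b = 0 := by
    intro a b hab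
    have : w.f a * w.f b = 0 := by rw [← map_mul, hab, map_zero]
    rcases mul_eq_zero.mp this with h' | h'
    · exact Or.inl (hinj0 a h')
    · exact Or.inr (hinj0 b h')
  have hcancel : ∀ a b c : S, a ≠ 0 → a * b = a * c → b = c := by
    intro a b c ha habc
    have h2 : w.f a * w.f b = w.f a * w.f c := by
      rw [← map_mul, ← map_mul, habc]
    exact w.inj (mul_left_cancel₀ (fun h0 => ha (hinj0 a h0)) h2)
  -- a handy lemma: a coefficient-set with all elements equal to a fixed nonzero coefficient
  have single_mcd : ∀ (f : S[X]) (j : ℕ), f.coeff j ≠ 0 →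
      (∀ t ∈ {a : S | a ≠ 0 ∧ ∃ i : ℕ, f.coeff i = a}, t = f.coeff j) →
      IsMCD (f.coeff j) {a : S | a ≠ 0 ∧ ∃ i : ℕ, f.coeff i = a} := by
    intro f j hj hall
    constructor
    · intro t ht
      rw [hall t ht]
    · rintro g ⟨h1, -⟩
      have hmem : f.coeff j ∈ {a : S | a ≠ 0 ∧ ∃ i : ℕ, f.coeff i = a} := ⟨hj, j, rfl⟩
      obtain ⟨e, he⟩ := h1 _ hmem
      have : f.coeff j * 1 = f.coeff j * (g * e) := by
        rw [mul_one, ← mul_assoc, ← he]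
      exact IsUnit.of_mul_eq_one (a := g) e (hcancel _ _ _ hj this).symm
  constructor
  · -- Atomicity of S
    intro a ha hu
    have hCa : (LaurentPolynomial.C a : LaurentPolynomial S) ≠ 0 := by
      rw [← Polynomial.toLaurent_C]
      exact Polynomial.toLaurent_ne_zero.mpr (Polynomial.C_ne_zero.mpr ha)
    have hCu : ¬ IsUnit (LaurentPolynomial.C a : LaurentPolynomial S) :=
      fun hc => hu (const_unit hnzd hc)
    obtain ⟨l, hlirr, hlprod⟩ := h _ hCa hCu
    exact atoms_const hnzd l 0 a hlirr (by rw [hlprod, T_zero, one_mul]) ha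
  · -- MCD part
    intro f hf
    obtain ⟨hf0, hfdec⟩ := hf
    by_cases hdeg0 : f.natDegree = 0
    · -- constant polynomial
      have hc0 : f.coeff 0 ≠ 0 := by
        intro hz
        apply hf0
        rw [Polynomial.eq_C_of_natDegree_eq_zero hdeg0, hz, map_zero]
      refine ⟨f.coeff 0, single_mcd f 0 hc0 ?_⟩
      rintro t ⟨htne, i, hti⟩
      rcases Nat.eq_zero_or_pos i with rfl | hi
      · exact hti.symm
      · exfalso
        apply htne
        rw [← hti]
        exact Polynomial.coeff_eq_zero_of_natDegree_lt (by omega)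
    · have hnt : Nontrivial S := by
        refine ⟨f.leadingCoeff, 0, ?_⟩
        exact Polynomial.leadingCoeff_ne_zero.mpr hf0
      by_cases hc0 : f.coeff 0 = 0
      · -- f = X * divX f ; indecomposability forces natDegree f = 1
        have hpd : f = X * f.divX := by
          conv_lhs => rw [← Polynomial.X_mul_divX_add f]
          rw [hc0, map_zero, add_zero]
        have hdx : f.divX ≠ 0 := by
          intro hd; apply hf0; rw [hpd, hd, mul_zero]
        have hXne : (X : S[X]) ≠ 0 := Polynomial.X_ne_zero
        have h1 : f.natDegree = 1 + f.divX.natDegree := by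
          conv_lhs => rw [hpd]
          rw [poly_natDegree_mul hnzd hXne hdx, Polynomial.natDegree_X]
        have hdx0 : f.divX.natDegree = 0 := by
          by_contra hne
          exact hfdec ⟨X, f.divX, by rw [Polynomial.natDegree_X]; omega, by omega, hpd⟩
        have hdeg1 : f.natDegree = 1 := by omega
        have hc1 : f.coeff 1 ≠ 0 := by
          have : f.coeff 1 = f.leadingCoeff := by
            rw [Polynomial.leadingCoeff, hdeg1]
          rw [this]
          exact Polynomial.leadingCoeff_ne_zero.mpr hf0
        refine ⟨f.coeff 1, single_mcd f 1 hc1 ?_⟩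
        rintro t ⟨htne, i, hti⟩
        rcases i with _ | _ | i
        · exact absurd (hc0 ▸ hti).symm htne
        · exact hti.symm
        · exfalso
          apply htne
          rw [← hti]
          exact Polynomial.coeff_eq_zero_of_natDegree_lt (by omega)
      · -- main case: positive degree, nonzero constant coefficient
        have hfl : Polynomial.toLaurent f ≠ 0 := Polynomial.toLaurent_ne_zero.mpr hf0
        have hfu : ¬ IsUnit (Polynomial.toLaurent f) :=
          nonunit_of_pos_degree hnzd hc0 (Nat.pos_of_ne_zero hdeg0)
        obtain ⟨l, hlirr, hlprod⟩ := h _ hfl hfu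
        obtain ⟨d, m, hfeq, hdne, hm⟩ := factor_poly hnzd l 0 f hlirr
          (by rw [hlprod, T_zero, one_mul]) hc0
        -- m has exactly one element
        have hmne : m ≠ 0 := by
          rintro rfl
          rw [Multiset.prod_zero, mul_one] at hfeq
          exact hdeg0 (by rw [hfeq, Polynomial.natDegree_C])
        obtain ⟨q, hqm⟩ := Multiset.exists_mem_of_ne_zero hmne
        obtain ⟨m'', rfl⟩ := Multiset.exists_cons_of_mem hqm
        obtain ⟨hq0, hqdeg, hqirr⟩ := hm q (Multiset.mem_cons_self q m'')
        have hm''0 : m'' = 0 := by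
          by_contra hne
          obtain ⟨q₂, hq₂m⟩ := Multiset.exists_mem_of_ne_zero hne
          obtain ⟨m₃, rfl⟩ := Multiset.exists_cons_of_mem hq₂m
          obtain ⟨hq₂0, hq₂deg, -⟩ := hm q₂
            (Multiset.mem_cons_of_mem (Multiset.mem_cons_self q₂ m₃))
          apply hfdec
          refine ⟨Polynomial.C d * q, q₂ * m₃.prod, ?_, ?_, ?_⟩
          · have hCdne : (Polynomial.C d : S[X]) ≠ 0 := Polynomial.C_ne_zero.mpr hdne
            have hqne : q ≠ 0 := fun hz => hq0 (by rw [hz, Polynomial.coeff_zero])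
            rw [poly_natDegree_mul hnzd hCdne hqne, Polynomial.natDegree_C]
            omega
          · have hq₂ne : q₂ ≠ 0 := fun hz => hq₂0 (by rw [hz, Polynomial.coeff_zero])
            have hm₃ne : m₃.prod ≠ 0 := by
              intro hz
              apply hf0
              rw [hfeq, Multiset.prod_cons, Multiset.prod_cons, hz]
              ring
            rw [poly_natDegree_mul hnzd hq₂ne hm₃ne]
            omega
          · rw [hfeq, Multiset.prod_cons, Multiset.prod_cons]
            ring
        rw [hm''0] at hfeq
        rw [Multiset.prod_cons, Multiset.prod_zero, mul_one] at hfeq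
        -- Now f = C d * q with q Laurent-irreducible of positive degree
        refine ⟨d, ?_, ?_⟩
        · rintro t ⟨-, i, hti⟩
          refine ⟨q.coeff i, ?_⟩
          rw [← hti, hfeq, Polynomial.coeff_C_mul]
        · rintro g ⟨h1, -⟩
          have hgq : ∀ i, g ∣ q.coeff i := by
            intro i
            by_cases hfi : f.coeff i = 0
            · have : d * q.coeff i = 0 := by
                rw [← Polynomial.coeff_C_mul, ← hfeq]; exact hfi
              rcases hnzd _ _ this with h' | h'
              · exact absurd h' hdne
              · rw [h']; exact dvd_zero g
            · obtain ⟨e, he⟩ := h1 (f.coeff i) ⟨hfi, i, rfl⟩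
              rw [hfeq, Polynomial.coeff_C_mul] at he
              refine ⟨e, hcancel d _ _ hdne ?_⟩
              rw [he]; ring
          obtain ⟨q', hq'⟩ := dvd_factor hgq
          have hdecomp : Polynomial.toLaurent q
              = LaurentPolynomial.C g * Polynomial.toLaurent q' := by
            rw [hq', map_mul, Polynomial.toLaurent_C]
          rcases hqirr.isUnit_or_isUnit hdecomp with h' | h'
          · exact const_unit hnzd h'
          · exfalso
            have hgne : g ≠ 0 := by
              intro hz
              apply hq0
              rw [hq', hz, map_zero, zero_mul, Polynomial.coeff_zero]
            have hq'0 : q'.coeff 0 ≠ 0 := by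
              intro hz
              apply hq0
              rw [hq', Polynomial.mul_coeff_zero, hz, mul_zero]
            have hq'ne : q' ≠ 0 := fun hz => hq'0 (by rw [hz, Polynomial.coeff_zero])
            have hq'deg : 0 < q'.natDegree := by
              have := poly_natDegree_mul hnzd (Polynomial.C_ne_zero.mpr hgne) hq'ne
              rw [← hq', Polynomial.natDegree_C] at this
              omega
            exact nonunit_of_pos_degree hnzd hq'0 hq'deg h'
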